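/- Let T be a tree and T_1, ..., T_k subtrees whose roots share a common parent p. After a shallow fold replacing T_1, ..., T_k by a single tree T_f whose root is a child of p and whose children are the union of the children of the roots of the T_i, the set of leaves below p is unchanged, and for any two leaves x ∈ leaves(T_i), y ∈ leaves(T_j) with i ≠ j, the smallest cluster containing both x and y in the new tree has size |leaves(T_1)| + ... + |leaves(T_k)|. -/

import Mathlib

/-- A rooted tree with arbitrary branching, leaves labelled by data points. -/
inductive RT (α : Type) : Type
  | leaf : α → RT α
  | node : List (RT α) → RT α

mutual
  /-- The list of leaves (data points) of a tree. -/
  def RT.leavesR {α : Type} : RT α → List α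
    | .leaf a => [a]
    | .node cs => RT.leavesRL cs
  /-- The leaves of a forest. -/
  def RT.leavesRL {α : Type} : List (RT α) → List α
    | [] => []
    | c :: cs => c.leavesR ++ RT.leavesRL cs
end

mutual
  /-- The cluster of the lowest common ancestor of leaves `x` and `y`:
  the leaf set of the smallest subtree containing both. -/
  def RT.minclR {α : Type} [DecidableEq α] (x y : α) : RT α → Finset α
    | .leaf a => {a}
    | .node cs => RT.minclRL x y cs (RT.leavesRL cs).toFinset
  /-- Search the children for one containing both leaves; otherwise return
  the default (the current node's cluster). -/
  def RT.minclRL {α : Type} [DecidableEq α] (x y : α) :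
      List (RT α) → Finset α → Finset α
    | [], dflt => dflt
    | c :: cs, dflt =>
        if x ∈ c.leavesR ∧ y ∈ c.leavesR then RT.minclR x y c
        else RT.minclRL x y cs dflt
end

/-- The children of the root of a tree. -/
def RT.rootChildren {α : Type} : RT α → List (RT α)
  | .leaf _ => []
  | .node cs => cs
theorem leavesRL_eq {α : Type} : ∀ cs : List (RT α), RT.leavesRL cs = cs.flatMap RT.leavesR
  | [] => rfl
  | c :: cs => by rw [RT.leavesRL, List.flatMap_cons, leavesRL_eq cs]

theorem minclRL_default {α : Type} [DecidableEq α] (x y : α) :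
    ∀ (cs : List (RT α)) (d : Finset α),
      (∀ c ∈ cs, ¬(x ∈ c.leavesR ∧ y ∈ c.leavesR)) → RT.minclRL x y cs d = d
  | [], d, _ => rfl
  | c :: cs, d, h => by
    rw [RT.minclRL, if_neg (h c (List.mem_cons_self ..))]
    exact minclRL_default x y cs d (fun c hc => h c (List.mem_cons_of_mem _ hc))

theorem tfleaves {α : Type} : ∀ ts : List (RT α),
    (∀ t ∈ ts, ∃ cs, t = RT.node cs) →
    RT.leavesRL (ts.flatMap RT.rootChildren) = RT.leavesRL ts
  | [], _ => rfl
  | t :: ts, h => by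
    obtain ⟨cs, rfl⟩ := h t (List.mem_cons_self ..)
    rw [List.flatMap_cons, leavesRL_eq, List.flatMap_append, ← leavesRL_eq,
      ← leavesRL_eq, tfleaves ts (fun c hc => h c (List.mem_cons_of_mem _ hc)),
      RT.leavesRL, RT.leavesR, RT.rootChildren]

/-- Let `T_1, ..., T_k` (the list `ts`, with non-leaf roots)
be subtrees whose roots share the common parent `p = node (ts ++ rest)`.
A shallow fold replaces them by the single tree
`Tf = node (⋃ children of roots of the T_i)`, giving `p' = node (Tf :: rest)`.
Then the leaves below `p` are unchanged, and for leaves `x ∈ leaves(T_i)`,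
`y ∈ leaves(T_j)` with `i ≠ j`, the smallest cluster of `p'` containing both
has size `|leaves(T_1)| + ... + |leaves(T_k)|`. -/
theorem shallow_fold_leaves_and_lca {α : Type} [DecidableEq α]
    (ts rest : List (RT α)) (hne : ts ≠ [])
    (hnodes : ∀ t ∈ ts, ∃ cs, t = RT.node cs)
    (p : RT α) (hp : p = RT.node (ts ++ rest))
    (Tf : RT α) (hTf : Tf = RT.node (ts.flatMap RT.rootChildren))
    (p' : RT α) (hp' : p' = RT.node (Tf :: rest))
    (hnodup : p.leavesR.Nodup) :
    p'.leavesR.toFinset = p.leavesR.toFinset ∧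
      ∀ i j : Fin ts.length, i ≠ j →
        ∀ x ∈ (ts.get i).leavesR, ∀ y ∈ (ts.get j).leavesR,
          (RT.minclR x y p').card
            = (ts.map fun t => t.leavesR.length).sum := by
  subst hp hTf hp'
  have hleaves : (RT.node ((RT.node (ts.flatMap RT.rootChildren)) :: rest) : RT α).leavesR
      = (RT.node (ts ++ rest) : RT α).leavesR := by
    rw [RT.leavesR, RT.leavesR, RT.leavesRL, RT.leavesR, tfleaves ts hnodes,
      leavesRL_eq (ts ++ rest), List.flatMap_append, ← leavesRL_eq, ← leavesRL_eq]
  refine ⟨by rw [hleaves], ?_⟩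
  intro i j hij x hx y hy
  -- leaves of p as list
  have hpl : (RT.node (ts ++ rest) : RT α).leavesR
      = ts.flatMap RT.leavesR ++ rest.flatMap RT.leavesR := by
    rw [RT.leavesR, leavesRL_eq, List.flatMap_append]
  have hnd : (ts.flatMap RT.leavesR).Nodup := by
    rw [hpl] at hnodup; exact hnodup.of_append_left
  -- disjointness between leaves of distinct subtrees
  have hdisj : ∀ i j : Fin ts.length, i ≠ j →
      ∀ a, a ∈ (ts.get i).leavesR → a ∈ (ts.get j).leavesR → False := by
    intro i j hij a hai haj
    have hpw : (ts.map RT.leavesR).Pairwise List.Disjoint := by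
      have := (List.nodup_flatten (L := ts.map RT.leavesR)).mp (by
        rwa [List.flatMap] at hnd)
      exact this.2
    rcases lt_or_gt_of_ne (Fin.val_ne_of_ne hij) with h | h
    · have := List.pairwise_iff_get.mp hpw ⟨i, by simp⟩ ⟨j, by simp⟩ h
      simp only [List.get_eq_getElem, List.getElem_map] at this
      exact this hai haj
    · have := List.pairwise_iff_get.mp hpw ⟨j, by simp⟩ ⟨i, by simp⟩ h
      simp only [List.get_eq_getElem, List.getElem_map] at this
      exact this haj hai
  -- membership of x and y in Tf leaves
  have hmemT : ∀ (k : Fin ts.length) a, a ∈ (ts.get k).leavesR →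
      a ∈ (RT.node (ts.flatMap RT.rootChildren) : RT α).leavesR := by
    intro k a ha
    rw [RT.leavesR, tfleaves ts hnodes, leavesRL_eq, List.mem_flatMap]
    exact ⟨ts.get k, List.get_mem ts k, ha⟩
  have hxT := hmemT i x hx
  have hyT := hmemT j y hy
  -- compute minclR
  rw [RT.minclR, RT.minclRL, if_pos ⟨hxT, hyT⟩, RT.minclR]
  rw [minclRL_default]
  · -- cardinality
    have hndT : (RT.leavesRL (ts.flatMap RT.rootChildren)).Nodup := by
      rw [tfleaves ts hnodes, leavesRL_eq]; exact hnd
    rw [List.toFinset_card_of_nodup hndT, tfleaves ts hnodes, leavesRL_eq,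
      List.length_flatMap]
  · -- no child of Tf contains both x and y
    intro c hc ⟨hxc, hyc⟩
    rw [List.mem_flatMap] at hc
    obtain ⟨t, ht, hct⟩ := hc
    obtain ⟨m, hm⟩ := List.get_of_mem ht
    obtain ⟨cs, hcs⟩ := hnodes t ht
    have hsub : ∀ a, a ∈ c.leavesR → a ∈ t.leavesR := by
      intro a ha
      rw [hcs, RT.leavesR, leavesRL_eq, List.mem_flatMap]
      rw [hcs, RT.rootChildren] at hct
      exact ⟨c, hct, ha⟩
    have him : i = m := by
      by_contra h
      exact hdisj i m h x hx (hm ▸ hsub x hxc)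
    have hjm : j = m := by
      by_contra h
      exact hdisj j m h y hy (hm ▸ hsub y hyc)
    exact hij (him.trans hjm.symm)
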